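/- Let a^1, …, a^n ∈ ℕ^n be n nonzero exponent vectors (the same number as the number of variables) whose associated monomials z^{a^1}, …, z^{a^n} have common zero set {0} in ℂ^n. Then there is a permutation σ of {1, …, n} such that a^j = b_j · e_{σ(j)} for positive integers b_j; that is, each monomial is a pure power of a distinct variable. -/
import Mathlib


theorem stmt_9 (n : ℕ) (a : Fin n → Fin n → ℕ) (ha : ∀ j, a j ≠ 0)
    (hV : {z : Fin n → ℂ | ∀ j, ∏ k, z k ^ a j k = 0} = {0}) :
    ∃ σ : Equiv.Perm (Fin n), ∀ j, ∃ b : ℕ, 1 ≤ b ∧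
      a j = fun i => if i = σ j then b else 0 := by
  -- For each variable i, there is a j whose support is {i}.
  have key : ∀ i : Fin n, ∃ j, ∀ k, a j k ≠ 0 → k = i := by
    intro i
    set z : Fin n → ℂ := Pi.single i 1 with hz
    have hz0 : z ≠ 0 := by
      intro h
      have := congrFun h i
      simp [hz, Pi.single_eq_same] at this
    have hznot : z ∉ ({z : Fin n → ℂ | ∀ j, ∏ k, z k ^ a j k = 0}) := by
      rw [hV]; simpa using hz0
    simp only [Set.mem_setOf_eq, not_forall] at hznot
    obtain ⟨j, hj⟩ := hznot
    refine ⟨j, fun k hk => ?_⟩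
    by_contra hki
    apply hj
    apply Finset.prod_eq_zero (Finset.mem_univ k)
    have : z k = 0 := Pi.single_eq_of_ne hki 1
    rw [this]
    exact zero_pow hk
  choose g hg using key
  have hinj : Function.Injective g := by
    intro i i' h
    obtain ⟨k, hk⟩ := Function.ne_iff.mp (ha (g i))
    have h1 := hg i k hk
    have h2 : k = i' := by
      rw [h] at hk
      exact hg i' k hk
    simp [Pi.zero_apply] at hk
    rw [← h1, h2]
  let e : Equiv.Perm (Fin n) := Equiv.ofBijective g (Finite.injective_iff_bijective.mp hinj)
  refine ⟨e.symm, fun j => ?_⟩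
  have hej : g (e.symm j) = j := e.apply_symm_apply j
  have hsupp : ∀ k, a j k ≠ 0 → k = e.symm j := by
    intro k hk
    exact hg (e.symm j) k (by rwa [hej])
  have hb : a j (e.symm j) ≠ 0 := by
    obtain ⟨k, hk⟩ := Function.ne_iff.mp (ha j)
    simp only [Pi.zero_apply] at hk
    rwa [← hsupp k hk]
  refine ⟨a j (e.symm j), Nat.one_le_iff_ne_zero.mpr hb, ?_⟩
  funext k
  by_cases hki : k = e.symm j
  · simp [hki]
  · simp only [hki, if_false]
    by_contra h
    exact hki (hsupp k h)
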